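/- Consider the 1-forms on ℝ⁴ with coordinates (x, y, z, θ): η¹ = e^{−θ}((1+θ)dx − θ dy), η² = e^{−θ}(θ dx + (1−θ)dy), η³ = e^{−2θ}(dz + (1/2)(x dy − y dx)), φ = dθ. Then dη¹ = η² ∧ φ, dη² = −η¹ ∧ φ + 2 η² ∧ φ, dη³ = η¹ ∧ η² + 2 η³ ∧ φ, and dφ = 0. -/

import Mathlib

open Real

/-- The exterior derivative of a 1-form on `ℝ⁴` (a 1-form being given by its
action `ω p X` on constant vector fields `X`), evaluated on constant vectors. -/
noncomputable def extD (ω : (Fin 4 → ℝ) → (Fin 4 → ℝ) → ℝ) :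
    (Fin 4 → ℝ) → (Fin 4 → ℝ) → (Fin 4 → ℝ) → ℝ :=
  fun p X Y => fderiv ℝ (fun q => ω q Y) p X - fderiv ℝ (fun q => ω q X) p Y

/-- The wedge product of two 1-forms on `ℝ⁴`. -/
def wedge (α β : (Fin 4 → ℝ) → (Fin 4 → ℝ) → ℝ) :
    (Fin 4 → ℝ) → (Fin 4 → ℝ) → (Fin 4 → ℝ) → ℝ :=
  fun p X Y => α p X * β p Y - α p Y * β p X


private lemma projFD (i : Fin 4) (p : Fin 4 → ℝ) :
    HasFDerivAt (fun q : Fin 4 → ℝ => q i)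
      (ContinuousLinearMap.proj i : (Fin 4 → ℝ) →L[ℝ] ℝ) p :=
  by exact (ContinuousLinearMap.proj i : (Fin 4 → ℝ) →L[ℝ] ℝ).hasFDerivAt

private lemma d1 (Z p X : Fin 4 → ℝ) :
    fderiv ℝ (fun q : Fin 4 → ℝ =>
      Real.exp (-q 3) * ((1 + q 3) * Z 0 - q 3 * Z 1)) p X
    = Real.exp (-p 3) * (-X 3) * ((1 + p 3) * Z 0 - p 3 * Z 1)
      + Real.exp (-p 3) * (X 3 * Z 0 - X 3 * Z 1) := by
  have he : HasFDerivAt (fun q : Fin 4 → ℝ => Real.exp (-q 3))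
      (Real.exp (-p 3) • (-(ContinuousLinearMap.proj 3 : (Fin 4 → ℝ) →L[ℝ] ℝ))) p :=
    (projFD 3 p).neg.exp
  have hg : HasFDerivAt (fun q : Fin 4 → ℝ => (1 + q 3) * Z 0 - q 3 * Z 1)
      (Z 0 • ((0 : (Fin 4 → ℝ) →L[ℝ] ℝ) + ContinuousLinearMap.proj 3)
        - Z 1 • (ContinuousLinearMap.proj 3 : (Fin 4 → ℝ) →L[ℝ] ℝ)) p :=
    (((hasFDerivAt_const (1:ℝ) p).add (projFD 3 p)).mul_const (Z 0)).sub
      ((projFD 3 p).mul_const (Z 1))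
  have h := (he.mul hg).fderiv
  simp only [Pi.mul_def] at h
  rw [h]
  simp [ContinuousLinearMap.proj_apply, smul_eq_mul]
  ring

private lemma d2 (Z p X : Fin 4 → ℝ) :
    fderiv ℝ (fun q : Fin 4 → ℝ =>
      Real.exp (-q 3) * (q 3 * Z 0 + (1 - q 3) * Z 1)) p X
    = Real.exp (-p 3) * (-X 3) * (p 3 * Z 0 + (1 - p 3) * Z 1)
      + Real.exp (-p 3) * (X 3 * Z 0 - X 3 * Z 1) := by
  have he : HasFDerivAt (fun q : Fin 4 → ℝ => Real.exp (-q 3))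
      (Real.exp (-p 3) • (-(ContinuousLinearMap.proj 3 : (Fin 4 → ℝ) →L[ℝ] ℝ))) p :=
    (projFD 3 p).neg.exp
  have hg : HasFDerivAt (fun q : Fin 4 → ℝ => q 3 * Z 0 + (1 - q 3) * Z 1)
      (Z 0 • (ContinuousLinearMap.proj 3 : (Fin 4 → ℝ) →L[ℝ] ℝ)
        + Z 1 • ((0 : (Fin 4 → ℝ) →L[ℝ] ℝ) - ContinuousLinearMap.proj 3)) p :=
    ((projFD 3 p).mul_const (Z 0)).add
      (((hasFDerivAt_const (1:ℝ) p).sub (projFD 3 p)).mul_const (Z 1))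
  have h := (he.mul hg).fderiv
  simp only [Pi.mul_def] at h
  rw [h]
  simp [ContinuousLinearMap.proj_apply, smul_eq_mul]
  ring

private lemma d3 (Z p X : Fin 4 → ℝ) :
    fderiv ℝ (fun q : Fin 4 → ℝ =>
      Real.exp (-2 * q 3) * (Z 2 + (1/2) * (q 0 * Z 1 - q 1 * Z 0))) p X
    = Real.exp (-2 * p 3) * (-2 * X 3) * (Z 2 + (1/2) * (p 0 * Z 1 - p 1 * Z 0))
      + Real.exp (-2 * p 3) * ((1/2) * (X 0 * Z 1 - X 1 * Z 0)) := by
  have he : HasFDerivAt (fun q : Fin 4 → ℝ => Real.exp (-2 * q 3))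
      (Real.exp (-2 * p 3) • ((-2 : ℝ) • (ContinuousLinearMap.proj 3 : (Fin 4 → ℝ) →L[ℝ] ℝ))) p :=
    ((projFD 3 p).const_mul (-2)).exp
  have hg : HasFDerivAt (fun q : Fin 4 → ℝ => Z 2 + (1/2) * (q 0 * Z 1 - q 1 * Z 0))
      ((0 : (Fin 4 → ℝ) →L[ℝ] ℝ) + (1/2 : ℝ) •
        (Z 1 • (ContinuousLinearMap.proj 0 : (Fin 4 → ℝ) →L[ℝ] ℝ)
          - Z 0 • (ContinuousLinearMap.proj 1 : (Fin 4 → ℝ) →L[ℝ] ℝ))) p :=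
    (hasFDerivAt_const (Z 2) p).add
      ((((projFD 0 p).mul_const (Z 1)).sub ((projFD 1 p).mul_const (Z 0))).const_mul (1/2))
  have h := (he.mul hg).fderiv
  simp only [Pi.mul_def] at h
  rw [h]
  simp [ContinuousLinearMap.proj_apply, smul_eq_mul]
  ring

theorem homogeneous_structure_equations_I_eq_two
    (η₁ η₂ η₃ φ : (Fin 4 → ℝ) → (Fin 4 → ℝ) → ℝ)
    (hη₁ : ∀ p X, η₁ p X = Real.exp (-p 3) * ((1 + p 3) * X 0 - p 3 * X 1))
    (hη₂ : ∀ p X, η₂ p X = Real.exp (-p 3) * (p 3 * X 0 + (1 - p 3) * X 1))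
    (hη₃ : ∀ p X, η₃ p X = Real.exp (-2 * p 3) *
        (X 2 + (1/2) * (p 0 * X 1 - p 1 * X 0)))
    (hφ : ∀ p X, φ p X = X 3) :
    ∀ p X Y,
      extD η₁ p X Y = wedge η₂ φ p X Y ∧
      extD η₂ p X Y = -wedge η₁ φ p X Y + 2 * wedge η₂ φ p X Y ∧
      extD η₃ p X Y = wedge η₁ η₂ p X Y + 2 * wedge η₃ φ p X Y ∧
      extD φ p X Y = 0 := by
  intro p X Y
  have hex : Real.exp (-2 * p 3) = Real.exp (-p 3) * Real.exp (-p 3) := by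
    rw [← Real.exp_add]; ring_nf
  refine ⟨?_, ?_, ?_, ?_⟩
  · simp only [extD, wedge, hη₁, hη₂, hφ, d1]; ring
  · simp only [extD, wedge, hη₁, hη₂, hφ, d2]; ring
  · simp only [extD, wedge, hη₁, hη₂, hη₃, hφ, d3, hex]; ring
  · simp only [extD, hφ, fderiv_const]; simp
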